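/- For every integer Q≥2 there is a constant C_Q>0 such that the following holds. Let 𝒰 be a Unique Games instance over alphabet [Q] on a finite multigraph G=(V,E) with m>0 and no isolated vertices, and suppose τ_UG(𝒰) ≤ ε. Then for every real L ≥ 1, Σ_{s∈V} π(s)·μ^{UG}_L(s) ≤ C_Q·ε·L. Consequently, for every α>0, Σ_{s∈V: μ^{UG}_L(s) ≥ α} π(s) ≤ C_Q·εL/α. -/

import Mathlib

open scoped Classical

noncomputable section

/-- Degree of a vertex in a finite multigraph given by endpoint maps (with multiplicity). -/
def mdeg {V E : Type} [Fintype E] [DecidableEq V] (fste snde : E → V) (v : V) : ℕ :=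
  (Finset.univ.filter (fun e => fste e = v)).card +
    (Finset.univ.filter (fun e => snde e = v)).card

/-- The label-lifted lazy walk on `V × [Q]`: from `(v,b)` stay put with probability `1/2`,
and for each edge copy with endpoints `v,u`, move to `(u, π_{vu}(b))` with probability
`1/(2 deg v)` (constraints are stored oriented from `fste` to `snde`). -/
def ugWalk {V E : Type} [Fintype V] [Fintype E] [DecidableEq V] {Q : ℕ}
    (fste snde : E → V) (perm : E → Equiv.Perm (Fin Q)) :
    Matrix (V × Fin Q) (V × Fin Q) ℝ :=
  Matrix.of fun p q =>
    (if q = p then (1 / 2 : ℝ) else 0) +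
    ((Finset.univ.filter (fun e =>
        (fste e = p.1 ∧ snde e = q.1 ∧ perm e p.2 = q.2) ∨
        (snde e = p.1 ∧ fste e = q.1 ∧ (perm e)⁻¹ p.2 = q.2))).card : ℝ) /
      (2 * (mdeg fste snde p.1 : ℝ))

/-- The geometric (Personalized PageRank) kernel at scale `L`:
`pr_L = (1/(L+1)) Σ_t (L/(L+1))^t M̂^t`. -/
def ugPr {V E : Type} [Fintype V] [Fintype E] [DecidableEq V] {Q : ℕ}
    (fste snde : E → V) (perm : E → Equiv.Perm (Fin Q)) (L : ℝ)
    (p q : V × Fin Q) : ℝ :=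
  ∑' t : ℕ, (1 / (L + 1)) * (L / (L + 1)) ^ t * (ugWalk fste snde perm ^ t) p q

/-- Ambiguity of seed label `a` at seed `s` and scale `L`:
`Amb_L(s,a) = Σ_v (u_{L,s}(v) − max_b p^{a,b}_{L,s}(v))`. -/
def ugAmb {V E : Type} [Fintype V] [Fintype E] [DecidableEq V] {Q : ℕ}
    (fste snde : E → V) (perm : E → Equiv.Perm (Fin Q)) (L : ℝ) (s : V) (a : Fin Q) : ℝ :=
  ∑ v : V, ((∑ b : Fin Q, ugPr fste snde perm L (s, a) (v, b)) -
    ⨆ b : Fin Q, ugPr fste snde perm L (s, a) (v, b))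

/-- `μ^{UG}_L(s) = min_{a∈[Q]} Amb_L(s,a)`. -/
def ugMu {V E : Type} [Fintype V] [Fintype E] [DecidableEq V] {Q : ℕ}
    (fste snde : E → V) (perm : E → Equiv.Perm (Fin Q)) (L : ℝ) (s : V) : ℝ :=
  ⨅ a : Fin Q, ugAmb fste snde perm L s a

/-- `τ_UG(𝒰)`: the minimum, over labelings `x : V → [Q]`, of the fraction of violated
edge copies. -/
def tauUG {V E : Type} [Fintype V] [Fintype E] [DecidableEq V] {Q : ℕ}
    (fste snde : E → V) (perm : E → Equiv.Perm (Fin Q)) : ℝ :=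
  ⨅ x : V → Fin Q,
    ((Finset.univ.filter (fun e => x (snde e) ≠ perm e (x (fste e)))).card : ℝ) /
      (Fintype.card E : ℝ)

lemma card_filter_two {α : Type*} [Fintype α] {P1 P2 : Prop} [Decidable P1] [Decidable P2]
    {q1 q2 : α} (h : ¬(P1 ∧ P2)) {C : α → Prop} [DecidablePred C]
    (hC : ∀ q, C q ↔ (P1 ∧ q = q1) ∨ (P2 ∧ q = q2)) :
    (Finset.univ.filter C).card = (if P1 then 1 else 0) + (if P2 then 1 else 0) := by
  by_cases h1 : P1 <;> by_cases h2 : P2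
  · exact absurd ⟨h1, h2⟩ h
  · have he : Finset.univ.filter C = {q1} := by
      ext q; simp [hC, h1, h2]
    simp [he, h1, h2]
  · have he : Finset.univ.filter C = {q2} := by
      ext q; simp [hC, h1, h2]
    simp [he, h1, h2]
  · have he : Finset.univ.filter C = (∅ : Finset α) := by
      ext q; simp [hC, h1, h2]
    simp [he, h1, h2]

section UG

variable {V E : Type} [Fintype V] [Fintype E] [DecidableEq V] {Q : ℕ}
variable (fste snde : E → V) (perm : E → Equiv.Perm (Fin Q))

/-- counting over target states q, restricted by a predicate B -/
lemma ug_count (h_ne : ∀ e, fste e ≠ snde e) (p : V × Fin Q)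
    (B : V × Fin Q → Prop) (e : E) :
    (Finset.univ.filter (fun q : V × Fin Q => B q ∧
       ((fste e = p.1 ∧ snde e = q.1 ∧ perm e p.2 = q.2) ∨
        (snde e = p.1 ∧ fste e = q.1 ∧ (perm e)⁻¹ p.2 = q.2)))).card
    = (if fste e = p.1 ∧ B (snde e, perm e p.2) then 1 else 0)
    + (if snde e = p.1 ∧ B (fste e, (perm e)⁻¹ p.2) then 1 else 0) := by
  apply card_filter_two (q1 := (snde e, perm e p.2)) (q2 := (fste e, (perm e)⁻¹ p.2))
  · rintro ⟨⟨h1, -⟩, ⟨h2, -⟩⟩; exact h_ne e (h1.trans h2.symm)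
  · intro q
    constructor
    · rintro ⟨hB, hc | hc⟩
      · obtain ⟨h1, h2, h3⟩ := hc
        have hq : q = (snde e, perm e p.2) := by
          cases q; simp_all
        exact Or.inl ⟨⟨h1, hq ▸ hB⟩, hq⟩
      · obtain ⟨h1, h2, h3⟩ := hc
        have hq : q = (fste e, (perm e)⁻¹ p.2) := by
          cases q; simp_all
        exact Or.inr ⟨⟨h1, hq ▸ hB⟩, hq⟩
    · rintro (⟨⟨h1, hB⟩, rfl⟩ | ⟨⟨h1, hB⟩, rfl⟩)
      · exact ⟨hB, Or.inl ⟨h1, rfl, rfl⟩⟩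
      · exact ⟨hB, Or.inr ⟨h1, rfl, rfl⟩⟩

/-- counting over source states p -/
lemma ug_count_col (h_ne : ∀ e, fste e ≠ snde e) (q : V × Fin Q) (e : E) :
    (Finset.univ.filter (fun p : V × Fin Q =>
       ((fste e = p.1 ∧ snde e = q.1 ∧ perm e p.2 = q.2) ∨
        (snde e = p.1 ∧ fste e = q.1 ∧ (perm e)⁻¹ p.2 = q.2)))).card
    = (if snde e = q.1 then 1 else 0) + (if fste e = q.1 then 1 else 0) := by
  apply card_filter_two (q1 := (fste e, (perm e)⁻¹ q.2)) (q2 := (snde e, perm e q.2))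
  · rintro ⟨h1, h2⟩; exact h_ne e (h2.trans h1.symm)
  · intro p
    constructor
    · rintro (⟨h1, h2, h3⟩ | ⟨h1, h2, h3⟩)
      · refine Or.inl ⟨h2, ?_⟩
        cases p
        simp only [Prod.mk.injEq]
        refine ⟨h1.symm, ?_⟩
        simp only at h3 ⊢
        rw [← h3]
        exact (Equiv.symm_apply_apply _ _).symm
      · refine Or.inr ⟨h2, ?_⟩
        cases p
        simp only [Prod.mk.injEq]
        refine ⟨h1.symm, ?_⟩
        simp only at h3 ⊢
        rw [← h3]
        exact (Equiv.apply_symm_apply _ _).symm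
    · rintro (⟨h1, rfl⟩ | ⟨h1, rfl⟩)
      · exact Or.inl ⟨rfl, h1, Equiv.apply_symm_apply _ _⟩
      · exact Or.inr ⟨rfl, h1, Equiv.symm_apply_apply _ _⟩

end UG

section UG2

set_option linter.unusedSectionVars false

variable {V E : Type} [Fintype V] [Fintype E] [DecidableEq V] {Q : ℕ}
variable (fste snde : E → V) (perm : E → Equiv.Perm (Fin Q))

lemma sum_count_B (h_ne : ∀ e, fste e ≠ snde e) (p : V × Fin Q) (B : V × Fin Q → Prop) :
    ∑ q ∈ Finset.univ.filter B,
      (Finset.univ.filter (fun e =>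
        (fste e = p.1 ∧ snde e = q.1 ∧ perm e p.2 = q.2) ∨
        (snde e = p.1 ∧ fste e = q.1 ∧ (perm e)⁻¹ p.2 = q.2))).card
    = (Finset.univ.filter (fun e => fste e = p.1 ∧ B (snde e, perm e p.2))).card
    + (Finset.univ.filter (fun e => snde e = p.1 ∧ B (fste e, (perm e)⁻¹ p.2))).card := by
  simp only [Finset.card_filter]
  rw [Finset.sum_comm, ← Finset.sum_add_distrib]
  apply Finset.sum_congr rfl
  intro e _
  rw [← Finset.card_filter, Finset.filter_filter]
  have h := ug_count fste snde perm h_ne p B e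
  omega

lemma sum_count_row (h_ne : ∀ e, fste e ≠ snde e) (p : V × Fin Q) :
    ∑ q : V × Fin Q,
      (Finset.univ.filter (fun e =>
        (fste e = p.1 ∧ snde e = q.1 ∧ perm e p.2 = q.2) ∨
        (snde e = p.1 ∧ fste e = q.1 ∧ (perm e)⁻¹ p.2 = q.2))).card
    = mdeg fste snde p.1 := by
  have h := sum_count_B fste snde perm h_ne p (fun _ => True)
  simpa [mdeg] using h

lemma sum_count_col (h_ne : ∀ e, fste e ≠ snde e) (q : V × Fin Q) :
    ∑ p : V × Fin Q,
      (Finset.univ.filter (fun e =>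
        (fste e = p.1 ∧ snde e = q.1 ∧ perm e p.2 = q.2) ∨
        (snde e = p.1 ∧ fste e = q.1 ∧ (perm e)⁻¹ p.2 = q.2))).card
    = mdeg fste snde q.1 := by
  simp only [Finset.card_filter]
  rw [Finset.sum_comm]
  have : ∀ e : E, (∑ p : V × Fin Q, if
        (fste e = p.1 ∧ snde e = q.1 ∧ perm e p.2 = q.2) ∨
        (snde e = p.1 ∧ fste e = q.1 ∧ (perm e)⁻¹ p.2 = q.2) then 1 else 0)
      = (if snde e = q.1 then 1 else 0) + (if fste e = q.1 then 1 else 0) := by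
    intro e
    rw [← Finset.card_filter]
    exact ug_count_col fste snde perm h_ne q e
  rw [Finset.sum_congr rfl fun e _ => this e, Finset.sum_add_distrib]
  simp only [← Finset.card_filter]
  rw [mdeg, add_comm]

lemma walk_nonneg (p q : V × Fin Q) : 0 ≤ ugWalk fste snde perm p q := by
  unfold ugWalk
  apply add_nonneg
  · split <;> norm_num
  · positivity

lemma walk_rowsum (h_ne : ∀ e, fste e ≠ snde e) (p : V × Fin Q)
    (hdeg : 0 < mdeg fste snde p.1) :
    ∑ q, ugWalk fste snde perm p q = 1 := by
  unfold ugWalk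
  simp only [Matrix.of_apply]
  rw [Finset.sum_add_distrib]
  have h1 : ∑ q : V × Fin Q, (if q = p then (1/2 : ℝ) else 0) = 1/2 := by simp
  have h2 : ∑ q : V × Fin Q, ((Finset.univ.filter (fun e =>
        (fste e = p.1 ∧ snde e = q.1 ∧ perm e p.2 = q.2) ∨
        (snde e = p.1 ∧ fste e = q.1 ∧ (perm e)⁻¹ p.2 = q.2))).card : ℝ) /
      (2 * (mdeg fste snde p.1 : ℝ)) = 1/2 := by
    rw [← Finset.sum_div]
    rw [show ∑ q : V × Fin Q, ((Finset.univ.filter (fun e =>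
        (fste e = p.1 ∧ snde e = q.1 ∧ perm e p.2 = q.2) ∨
        (snde e = p.1 ∧ fste e = q.1 ∧ (perm e)⁻¹ p.2 = q.2))).card : ℝ)
      = ((mdeg fste snde p.1 : ℕ) : ℝ) by
        rw [← Nat.cast_sum]
        exact_mod_cast congrArg (Nat.cast : ℕ → ℝ) (sum_count_row fste snde perm h_ne p)]
    have hd : (0:ℝ) < (mdeg fste snde p.1 : ℝ) := by exact_mod_cast hdeg
    field_simp
  rw [h1, h2]
  norm_num

lemma walk_colsum (h_ne : ∀ e, fste e ≠ snde e) (hdeg : ∀ v, 0 < mdeg fste snde v)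
    (q : V × Fin Q) :
    ∑ p : V × Fin Q, (mdeg fste snde p.1 : ℝ) * ugWalk fste snde perm p q
      = (mdeg fste snde q.1 : ℝ) := by
  unfold ugWalk
  simp only [Matrix.of_apply, mul_add]
  rw [Finset.sum_add_distrib]
  have h1 : ∑ p : V × Fin Q, (mdeg fste snde p.1 : ℝ) * (if q = p then (1/2:ℝ) else 0)
      = (mdeg fste snde q.1 : ℝ) / 2 := by
    rw [Finset.sum_eq_single q]
    · simp; ring
    · intro b _ hb; simp [Ne.symm hb]
    · intro h; exact absurd (Finset.mem_univ q) h
  have h2 : ∀ p : V × Fin Q, (mdeg fste snde p.1 : ℝ) * (((Finset.univ.filter (fun e =>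
        (fste e = p.1 ∧ snde e = q.1 ∧ perm e p.2 = q.2) ∨
        (snde e = p.1 ∧ fste e = q.1 ∧ (perm e)⁻¹ p.2 = q.2))).card : ℝ) /
      (2 * (mdeg fste snde p.1 : ℝ)))
      = ((Finset.univ.filter (fun e =>
        (fste e = p.1 ∧ snde e = q.1 ∧ perm e p.2 = q.2) ∨
        (snde e = p.1 ∧ fste e = q.1 ∧ (perm e)⁻¹ p.2 = q.2))).card : ℝ) / 2 := by
    intro p
    have hd : (0:ℝ) < (mdeg fste snde p.1 : ℝ) := by exact_mod_cast hdeg p.1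
    field_simp
  rw [h1, Finset.sum_congr rfl fun p _ => h2 p, ← Finset.sum_div]
  rw [show ∑ p : V × Fin Q, ((Finset.univ.filter (fun e =>
        (fste e = p.1 ∧ snde e = q.1 ∧ perm e p.2 = q.2) ∨
        (snde e = p.1 ∧ fste e = q.1 ∧ (perm e)⁻¹ p.2 = q.2))).card : ℝ)
      = ((mdeg fste snde q.1 : ℕ) : ℝ) by
        rw [← Nat.cast_sum]
        exact_mod_cast congrArg (Nat.cast : ℕ → ℝ) (sum_count_col fste snde perm h_ne q)]
  ring

end UG2

section UG3

set_option linter.unusedSectionVars false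
set_option maxHeartbeats 1000000

variable {V E : Type} [Fintype V] [Fintype E] [DecidableEq V] {Q : ℕ}
variable (fste snde : E → V) (perm : E → Equiv.Perm (Fin Q))

lemma pow_nonneg' (t : ℕ) (p q : V × Fin Q) : 0 ≤ (ugWalk fste snde perm ^ t) p q := by
  induction t generalizing p q with
  | zero =>
    simp only [pow_zero, Matrix.one_apply]
    split <;> norm_num
  | succ t ih =>
    rw [pow_succ, Matrix.mul_apply]
    exact Finset.sum_nonneg fun r _ => mul_nonneg (ih p r) (walk_nonneg fste snde perm r q)

lemma pow_rowsum (h_ne : ∀ e, fste e ≠ snde e) (hdeg : ∀ v, 0 < mdeg fste snde v)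
    (t : ℕ) (p : V × Fin Q) : ∑ q, (ugWalk fste snde perm ^ t) p q = 1 := by
  induction t generalizing p with
  | zero => simp [Matrix.one_apply]
  | succ t ih =>
    simp only [pow_succ, Matrix.mul_apply]
    rw [Finset.sum_comm]
    calc ∑ r, ∑ q : V × Fin Q, (ugWalk fste snde perm ^ t) p r * ugWalk fste snde perm r q
        = ∑ r : V × Fin Q, (ugWalk fste snde perm ^ t) p r := by
          apply Finset.sum_congr rfl
          intro r _
          rw [← Finset.mul_sum, walk_rowsum fste snde perm h_ne r (hdeg r.1), mul_one]
      _ = 1 := ih p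

lemma ugpow_le_one (h_ne : ∀ e, fste e ≠ snde e) (hdeg : ∀ v, 0 < mdeg fste snde v)
    (t : ℕ) (p q : V × Fin Q) : (ugWalk fste snde perm ^ t) p q ≤ 1 := by
  rw [← pow_rowsum fste snde perm h_ne hdeg t p]
  exact Finset.single_le_sum (fun r _ => pow_nonneg' fste snde perm t p r) (Finset.mem_univ q)

lemma pow_colsum (h_ne : ∀ e, fste e ≠ snde e) (hdeg : ∀ v, 0 < mdeg fste snde v)
    (t : ℕ) (q : V × Fin Q) :
    ∑ p : V × Fin Q, (mdeg fste snde p.1 : ℝ) * (ugWalk fste snde perm ^ t) p q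
      = (mdeg fste snde q.1 : ℝ) := by
  induction t generalizing q with
  | zero =>
    simp only [pow_zero, Matrix.one_apply]
    rw [Finset.sum_eq_single q]
    · simp
    · intro b _ hb; simp [hb]
    · intro h; exact absurd (Finset.mem_univ q) h
  | succ t ih =>
    simp only [pow_succ, Matrix.mul_apply, Finset.mul_sum]
    rw [Finset.sum_comm]
    calc ∑ r, ∑ p : V × Fin Q, (mdeg fste snde p.1 : ℝ) *
            ((ugWalk fste snde perm ^ t) p r * ugWalk fste snde perm r q)
        = ∑ r : V × Fin Q, (mdeg fste snde r.1 : ℝ) * ugWalk fste snde perm r q := by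
          apply Finset.sum_congr rfl
          intro r _
          calc ∑ p : V × Fin Q, (mdeg fste snde p.1 : ℝ) *
                  ((ugWalk fste snde perm ^ t) p r * ugWalk fste snde perm r q)
              = (∑ p : V × Fin Q, (mdeg fste snde p.1 : ℝ) * (ugWalk fste snde perm ^ t) p r) *
                  ugWalk fste snde perm r q := by
                rw [Finset.sum_mul]
                exact Finset.sum_congr rfl fun p _ => by ring
            _ = (mdeg fste snde r.1 : ℝ) * ugWalk fste snde perm r q := by rw [ih r]
      _ = (mdeg fste snde q.1 : ℝ) := walk_colsum fste snde perm h_ne hdeg q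

end UG3

section UG4

set_option linter.unusedSectionVars false
set_option maxHeartbeats 1000000

variable {V E : Type} [Fintype V] [Fintype E] [DecidableEq V] {Q : ℕ}
variable (fste snde : E → V) (perm : E → Equiv.Perm (Fin Q)) (x : V → Fin Q)

/-- number of violated edge copies incident to `v` (with multiplicity) -/
def violdeg (v : V) : ℕ :=
  (Finset.univ.filter (fun e => fste e = v ∧ x (snde e) ≠ perm e (x (fste e)))).card +
  (Finset.univ.filter (fun e => snde e = v ∧ x (snde e) ≠ perm e (x (fste e)))).card

lemma violdeg_sum :
    ∑ v : V, violdeg fste snde perm x v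
      = 2 * (Finset.univ.filter (fun e => x (snde e) ≠ perm e (x (fste e)))).card := by
  unfold violdeg
  rw [Finset.sum_add_distrib, two_mul]
  congr 1
  · rw [Finset.card_eq_sum_card_fiberwise (f := fste)
      (t := (Finset.univ : Finset V)) (fun e _ => Finset.mem_univ _)]
    apply Finset.sum_congr rfl
    intro v _
    rw [Finset.filter_filter]
    apply congrArg
    apply Finset.filter_congr
    intro e _
    constructor
    · rintro ⟨a, b⟩; exact ⟨b, a⟩
    · rintro ⟨a, b⟩; exact ⟨b, a⟩
  · rw [Finset.card_eq_sum_card_fiberwise (f := snde)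
      (t := (Finset.univ : Finset V)) (fun e _ => Finset.mem_univ _)]
    apply Finset.sum_congr rfl
    intro v _
    rw [Finset.filter_filter]
    apply congrArg
    apply Finset.filter_congr
    intro e _
    constructor
    · rintro ⟨a, b⟩; exact ⟨b, a⟩
    · rintro ⟨a, b⟩; exact ⟨b, a⟩

/-- one-step leakage from a good state into the bad set -/
lemma leak_eq (h_ne : ∀ e, fste e ≠ snde e) (v : V) :
    ∑ q ∈ Finset.univ.filter (fun q : V × Fin Q => q.2 ≠ x q.1),
        ugWalk fste snde perm (v, x v) q
      = (violdeg fste snde perm x v : ℝ) / (2 * (mdeg fste snde v : ℝ)) := by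
  unfold ugWalk
  simp only [Matrix.of_apply]
  rw [Finset.sum_add_distrib]
  have h1 : ∑ q ∈ Finset.univ.filter (fun q : V × Fin Q => q.2 ≠ x q.1),
      (if q = (v, x v) then (1/2 : ℝ) else 0) = 0 := by
    apply Finset.sum_eq_zero
    intro q hq
    simp only [Finset.mem_filter] at hq
    have : q ≠ (v, x v) := by
      intro h; subst h; exact hq.2 rfl
    simp [this]
  rw [h1, zero_add, ← Finset.sum_div]
  congr 1
  have hB := sum_count_B fste snde perm h_ne (v, x v) (fun q : V × Fin Q => q.2 ≠ x q.1)
  have hstep : (∑ q ∈ Finset.univ.filter (fun q : V × Fin Q => q.2 ≠ x q.1),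
      ((Finset.univ.filter (fun e =>
        (fste e = (v, x v).1 ∧ snde e = q.1 ∧ perm e (v, x v).2 = q.2) ∨
        (snde e = (v, x v).1 ∧ fste e = q.1 ∧ (perm e)⁻¹ (v, x v).2 = q.2))).card : ℕ))
      = violdeg fste snde perm x v := by
    refine Eq.trans ?_ (hB.trans ?_)
    · exact Finset.sum_congr (by ext q; simp only [Finset.mem_filter]) (fun q _ => rfl)
    unfold violdeg
    congr 1
    · apply congrArg
      ext e
      simp only [Finset.mem_filter, Finset.mem_univ, true_and]
      show (fste e = v ∧ perm e (x v) ≠ x (snde e)) ↔ _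
      constructor
      · rintro ⟨h1, h2⟩; subst h1; exact ⟨rfl, fun h => h2 h.symm⟩
      · rintro ⟨h1, h2⟩; subst h1; exact ⟨rfl, fun h => h2 h.symm⟩
    · apply congrArg
      ext e
      simp only [Finset.mem_filter, Finset.mem_univ, true_and]
      show (snde e = v ∧ (perm e)⁻¹ (x v) ≠ x (fste e)) ↔ _
      constructor
      · rintro ⟨h1, h2⟩; subst h1
        exact ⟨rfl, fun h => h2 (by rw [h, Equiv.Perm.inv_def, Equiv.symm_apply_apply])⟩
      · rintro ⟨h1, h2⟩; subst h1
        exact ⟨rfl, fun h => h2 (by rw [← h, Equiv.Perm.inv_def, Equiv.apply_symm_apply])⟩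
  calc ∑ q ∈ Finset.univ.filter (fun q : V × Fin Q => q.2 ≠ x q.1),
        ((Finset.univ.filter (fun e =>
          (fste e = v ∧ snde e = q.1 ∧ perm e (x v) = q.2) ∨
          (snde e = v ∧ fste e = q.1 ∧ (perm e)⁻¹ (x v) = q.2))).card : ℝ)
      = ∑ q ∈ Finset.univ.filter (fun q : V × Fin Q => q.2 ≠ x q.1),
        ((Finset.univ.filter (fun e =>
          (fste e = (v, x v).1 ∧ snde e = q.1 ∧ perm e (v, x v).2 = q.2) ∨
          (snde e = (v, x v).1 ∧ fste e = q.1 ∧ (perm e)⁻¹ (v, x v).2 = q.2))).card : ℝ) := by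
        apply Finset.sum_congr (by ext q; simp only [Finset.mem_filter])
        intro q _
        refine congrArg _ (congrArg Finset.card ?_)
        ext e
        simp only [Finset.mem_filter, Finset.mem_univ, true_and]
    _ = (violdeg fste snde perm x v : ℝ) := by
        rw [← Nat.cast_sum]
        exact_mod_cast congrArg (Nat.cast : ℕ → ℝ) hstep

/-- weighted mass bound from good seeds -/
lemma good_bound (h_ne : ∀ e, fste e ≠ snde e) (hdeg : ∀ v, 0 < mdeg fste snde v)
    (t : ℕ) (r : V × Fin Q) :
    ∑ s : V, (mdeg fste snde s : ℝ) * (ugWalk fste snde perm ^ t) (s, x s) r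
      ≤ (mdeg fste snde r.1 : ℝ) := by
  calc ∑ s : V, (mdeg fste snde s : ℝ) * (ugWalk fste snde perm ^ t) (s, x s) r
      ≤ ∑ s : V, ∑ b : Fin Q, (mdeg fste snde s : ℝ) *
          (ugWalk fste snde perm ^ t) (s, b) r := by
        apply Finset.sum_le_sum
        intro s _
        exact Finset.single_le_sum (f := fun b => (mdeg fste snde s : ℝ) *
          (ugWalk fste snde perm ^ t) (s, b) r)
          (fun b _ => mul_nonneg (by positivity) (pow_nonneg' fste snde perm t _ r))
          (Finset.mem_univ (x s))
    _ = ∑ p : V × Fin Q, (mdeg fste snde p.1 : ℝ) * (ugWalk fste snde perm ^ t) p r := by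
        rw [Fintype.sum_prod_type]
    _ = (mdeg fste snde r.1 : ℝ) := pow_colsum fste snde perm h_ne hdeg t r

/-- main induction: weighted bad mass grows at most linearly -/
lemma F_bound (h_ne : ∀ e, fste e ≠ snde e) (hdeg : ∀ v, 0 < mdeg fste snde v) (t : ℕ) :
    ∑ s : V, (mdeg fste snde s : ℝ) *
        ∑ q ∈ Finset.univ.filter (fun q : V × Fin Q => q.2 ≠ x q.1),
          (ugWalk fste snde perm ^ t) (s, x s) q
      ≤ t * (Finset.univ.filter (fun e => x (snde e) ≠ perm e (x (fste e)))).card := by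
  induction t with
  | zero =>
    simp only [pow_zero, Nat.cast_zero, zero_mul]
    apply le_of_eq
    apply Finset.sum_eq_zero
    intro s _
    rw [Finset.sum_eq_zero, mul_zero]
    intro q hq
    simp only [Finset.mem_filter] at hq
    rw [Matrix.one_apply]
    have : (s, x s) ≠ q := by
      intro h; rw [← h] at hq; exact hq.2 rfl
    simp [this]
  | succ t ih =>
    set M := ugWalk fste snde perm with hM
    set badS := Finset.univ.filter (fun q : V × Fin Q => q.2 ≠ x q.1) with hbadS
    set Vc := (Finset.univ.filter (fun e => x (snde e) ≠ perm e (x (fste e)))).card with hVc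
    set G : (V × Fin Q) → ℝ := fun p => ∑ s : V, (mdeg fste snde s : ℝ) * (M ^ t) (s, x s) p
      with hG
    have hstep : ∑ s : V, (mdeg fste snde s : ℝ) * ∑ q ∈ badS, (M ^ (t+1)) (s, x s) q
        = ∑ p : V × Fin Q, G p * ∑ q ∈ badS, M p q := by
      calc ∑ s : V, (mdeg fste snde s : ℝ) * ∑ q ∈ badS, (M ^ (t+1)) (s, x s) q
          = ∑ s : V, (mdeg fste snde s : ℝ) * ∑ q ∈ badS, ∑ j : V × Fin Q,
              (M ^ t) (s, x s) j * M j q := by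
            simp only [pow_succ, Matrix.mul_apply]
        _ = ∑ s : V, (mdeg fste snde s : ℝ) * ∑ j : V × Fin Q,
              ((M ^ t) (s, x s) j * ∑ q ∈ badS, M j q) := by
            apply Finset.sum_congr rfl
            intro s _
            congr 1
            rw [Finset.sum_comm]
            exact Finset.sum_congr rfl fun j _ => (Finset.mul_sum _ _ _).symm
        _ = ∑ s : V, ∑ j : V × Fin Q, (mdeg fste snde s : ℝ) *
              ((M ^ t) (s, x s) j * ∑ q ∈ badS, M j q) :=
            Finset.sum_congr rfl fun s _ => Finset.mul_sum _ _ _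
        _ = ∑ j : V × Fin Q, ∑ s : V, (mdeg fste snde s : ℝ) *
              ((M ^ t) (s, x s) j * ∑ q ∈ badS, M j q) := Finset.sum_comm
        _ = ∑ p : V × Fin Q, G p * ∑ q ∈ badS, M p q := by
            apply Finset.sum_congr rfl
            intro j _
            rw [hG, Finset.sum_mul]
            exact Finset.sum_congr rfl fun s _ => by ring
    rw [hstep]
    rw [← Finset.sum_filter_add_sum_filter_not Finset.univ
      (fun p : V × Fin Q => p.2 ≠ x p.1) (fun p => G p * ∑ q ∈ badS, M p q)]
    have hGnn : ∀ p, 0 ≤ G p := fun p => Finset.sum_nonneg fun s _ =>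
      mul_nonneg (by positivity) (pow_nonneg' fste snde perm t _ p)
    have hSnn : ∀ p : V × Fin Q, 0 ≤ ∑ q ∈ badS, M p q := fun p =>
      Finset.sum_nonneg fun q _ => walk_nonneg fste snde perm p q
    have hS1 : ∀ p : V × Fin Q, ∑ q ∈ badS, M p q ≤ 1 := by
      intro p
      rw [← walk_rowsum fste snde perm h_ne p (hdeg p.1)]
      exact Finset.sum_le_sum_of_subset_of_nonneg (Finset.filter_subset _ _)
        (fun q _ _ => walk_nonneg fste snde perm p q)
    have part1 : ∑ p ∈ Finset.univ.filter (fun p : V × Fin Q => p.2 ≠ x p.1),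
        G p * ∑ q ∈ badS, M p q ≤ t * Vc := by
      calc ∑ p ∈ Finset.univ.filter (fun p : V × Fin Q => p.2 ≠ x p.1),
            G p * ∑ q ∈ badS, M p q
          ≤ ∑ p ∈ Finset.univ.filter (fun p : V × Fin Q => p.2 ≠ x p.1), G p := by
            apply Finset.sum_le_sum
            intro p _
            calc G p * ∑ q ∈ badS, M p q ≤ G p * 1 :=
                  mul_le_mul_of_nonneg_left (hS1 p) (hGnn p)
              _ = G p := mul_one _
        _ = ∑ s : V, (mdeg fste snde s : ℝ) * ∑ q ∈ badS, (M ^ t) (s, x s) q := by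
            rw [Finset.sum_comm]
            exact Finset.sum_congr rfl fun s _ => (Finset.mul_sum _ _ _).symm
        _ ≤ t * Vc := ih
    have part2 : ∑ p ∈ Finset.univ.filter (fun p : V × Fin Q => ¬ p.2 ≠ x p.1),
        G p * ∑ q ∈ badS, M p q ≤ Vc := by
      have hpt : ∀ p ∈ Finset.univ.filter (fun p : V × Fin Q => ¬ p.2 ≠ x p.1),
          G p * ∑ q ∈ badS, M p q ≤ (violdeg fste snde perm x p.1 : ℝ) / 2 := by
        intro p hp
        simp only [Finset.mem_filter, not_not] at hp
        have hpgood : p = (p.1, x p.1) := by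
          cases p; simp_all
        calc G p * ∑ q ∈ badS, M p q
            ≤ (mdeg fste snde p.1 : ℝ) * ∑ q ∈ badS, M p q :=
              mul_le_mul_of_nonneg_right (good_bound fste snde perm x h_ne hdeg t p) (hSnn p)
          _ = (violdeg fste snde perm x p.1 : ℝ) / 2 := by
              rw [hpgood]
              rw [hbadS, leak_eq fste snde perm x h_ne p.1]
              have hd : (0:ℝ) < (mdeg fste snde p.1 : ℝ) := by exact_mod_cast hdeg p.1
              field_simp
      calc ∑ p ∈ Finset.univ.filter (fun p : V × Fin Q => ¬ p.2 ≠ x p.1),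
            G p * ∑ q ∈ badS, M p q
          ≤ ∑ p ∈ Finset.univ.filter (fun p : V × Fin Q => ¬ p.2 ≠ x p.1),
            (violdeg fste snde perm x p.1 : ℝ) / 2 := Finset.sum_le_sum hpt
        _ = ∑ v : V, (violdeg fste snde perm x v : ℝ) / 2 := by
            apply Finset.sum_nbij' (i := fun p : V × Fin Q => p.1) (j := fun v : V => (v, x v))
            · intro a _; exact Finset.mem_univ _
            · intro v _; simp
            · intro a ha
              simp only [Finset.mem_filter, not_not] at ha
              cases a; simp_all
            · intro v _; rfl
            · intro a _; rfl
        _ = Vc := by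
            rw [← Finset.sum_div]
            rw [← Nat.cast_sum, violdeg_sum fste snde perm x]
            push_cast
            ring
    calc (∑ p ∈ Finset.univ.filter (fun p : V × Fin Q => p.2 ≠ x p.1),
            G p * ∑ q ∈ badS, M p q)
          + ∑ p ∈ Finset.univ.filter (fun p : V × Fin Q => ¬ p.2 ≠ x p.1),
            G p * ∑ q ∈ badS, M p q
        ≤ t * Vc + Vc := add_le_add part1 part2
      _ = (t + 1 : ℕ) * Vc := by push_cast; ring

end UG4

set_option maxHeartbeats 2000000 in
/-- Weighted completeness for Unique Games ambiguity: if `τ_UG(𝒰) ≤ ε` then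
`E_{s∼π} μ^{UG}_L(s) ≤ C_Q ε L`, and hence `Pr_{s∼π}[μ^{UG}_L(s) ≥ α] ≤ C_Q ε L / α`. -/
theorem stmt13 (Q : ℕ) (hQ : 2 ≤ Q) :
    ∃ C > (0 : ℝ),
      ∀ (V E : Type) [Fintype V] [Fintype E] [DecidableEq V],
      ∀ (fste snde : E → V) (perm : E → Equiv.Perm (Fin Q)),
        (∀ e, fste e ≠ snde e) →
        (∀ v, 0 < mdeg fste snde v) →
        0 < Fintype.card E →
        ∀ ε : ℝ, tauUG fste snde perm ≤ ε →
        ∀ L : ℝ, 1 ≤ L →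
          (∑ s : V, ((mdeg fste snde s : ℝ) / (2 * (Fintype.card E : ℝ))) *
              ugMu fste snde perm L s) ≤ C * ε * L ∧
          ∀ α : ℝ, 0 < α →
            (∑ s ∈ Finset.univ.filter (fun s : V => α ≤ ugMu fste snde perm L s),
                ((mdeg fste snde s : ℝ) / (2 * (Fintype.card E : ℝ))))
              ≤ C * ε * L / α := by
  refine ⟨1, one_pos, ?_⟩
  intro V E _ _ _ fste snde perm h_ne hdeg hE ε htau L hL
  haveI : Nonempty (Fin Q) := Fin.pos_iff_nonempty.mp (by omega)
  have hL0 : (0:ℝ) < L := lt_of_lt_of_le one_pos hL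
  have hL1 : (0:ℝ) < L + 1 := by linarith
  have hlam0 : (0:ℝ) ≤ L / (L + 1) := by positivity
  have hlam1 : L / (L + 1) < 1 := by rw [div_lt_one hL1]; linarith
  have hm : (0:ℝ) < (Fintype.card E : ℝ) := by exact_mod_cast hE
  obtain ⟨x, hxmin⟩ := Finite.exists_min (fun y : V → Fin Q =>
    ((Finset.univ.filter (fun e => y (snde e) ≠ perm e (y (fste e)))).card : ℝ) /
      (Fintype.card E : ℝ))
  unfold tauUG at htau
  have hxε : ((Finset.univ.filter
      (fun e => x (snde e) ≠ perm e (x (fste e)))).card : ℝ) /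
      (Fintype.card E : ℝ) ≤ ε := (le_ciInf hxmin).trans htau
  set m : ℝ := (Fintype.card E : ℝ) with hmdef
  set Vc : ℝ := ((Finset.univ.filter
      (fun e => x (snde e) ≠ perm e (x (fste e)))).card : ℝ) with hVcdef
  have hVc0 : 0 ≤ Vc := by rw [hVcdef]; positivity
  have hε : 0 ≤ ε := le_trans (by rw [hVcdef] at hxε ⊢; positivity) hxε
  set M := ugWalk fste snde perm with hMdef
  -- summability facts
  have hgeo : Summable (fun t : ℕ => (1 / (L + 1)) * (L / (L + 1)) ^ t) :=
    (summable_geometric_of_lt_one hlam0 hlam1).mul_left _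
  have hsummand : ∀ p q : V × Fin Q,
      Summable (fun t : ℕ => (1 / (L + 1)) * (L / (L + 1)) ^ t * (M ^ t) p q) := by
    intro p q
    apply Summable.of_nonneg_of_le
      (fun t => mul_nonneg (by positivity) (pow_nonneg' fste snde perm t p q))
      (fun t => ?_) hgeo
    calc (1 / (L + 1)) * (L / (L + 1)) ^ t * (M ^ t) p q
        ≤ (1 / (L + 1)) * (L / (L + 1)) ^ t * 1 :=
          mul_le_mul_of_nonneg_left (ugpow_le_one fste snde perm h_ne hdeg t p q)
            (by positivity)
      _ = (1 / (L + 1)) * (L / (L + 1)) ^ t := mul_one _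
  have hPr_nn : ∀ p q : V × Fin Q, 0 ≤ ugPr fste snde perm L p q := by
    intro p q
    exact tsum_nonneg fun t => mul_nonneg (by positivity)
      (pow_nonneg' fste snde perm t p q)
  have hAmb_nn : ∀ s a, 0 ≤ ugAmb fste snde perm L s a := by
    intro s a
    apply Finset.sum_nonneg
    intro v _
    rw [sub_nonneg]
    apply ciSup_le
    intro b
    exact Finset.single_le_sum (fun b' _ => hPr_nn _ _) (Finset.mem_univ b)
  have hMu_nn : ∀ s, 0 ≤ ugMu fste snde perm L s :=
    fun s => le_ciInf fun a => hAmb_nn s a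
  have hMu_le : ∀ s, ugMu fste snde perm L s ≤ ugAmb fste snde perm L s (x s) :=
    fun s => ciInf_le (Finite.bddBelow_range _) (x s)
  have hAmb_le : ∀ s, ugAmb fste snde perm L s (x s)
      ≤ ∑ q ∈ Finset.univ.filter (fun q : V × Fin Q => q.2 ≠ x q.1),
          ugPr fste snde perm L (s, x s) q := by
    intro s
    unfold ugAmb
    calc ∑ v : V, ((∑ b : Fin Q, ugPr fste snde perm L (s, x s) (v, b)) -
          ⨆ b : Fin Q, ugPr fste snde perm L (s, x s) (v, b))
        ≤ ∑ v : V, ((∑ b : Fin Q, ugPr fste snde perm L (s, x s) (v, b)) -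
          ugPr fste snde perm L (s, x s) (v, x v)) := by
          apply Finset.sum_le_sum
          intro v _
          apply sub_le_sub_left
          exact le_ciSup (f := fun b => ugPr fste snde perm L (s, x s) (v, b))
            (Finite.bddAbove_range _) (x v)
      _ = ∑ v : V, ∑ b ∈ Finset.univ.erase (x v),
            ugPr fste snde perm L (s, x s) (v, b) := by
          apply Finset.sum_congr rfl
          intro v _
          exact (Finset.sum_erase_eq_sub (Finset.mem_univ (x v))).symm
      _ = ∑ q ∈ Finset.univ.filter (fun q : V × Fin Q => q.2 ≠ x q.1),
            ugPr fste snde perm L (s, x s) q := by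
          rw [Finset.sum_filter, Fintype.sum_prod_type]
          apply Finset.sum_congr rfl
          intro v _
          rw [← Finset.filter_ne', Finset.sum_filter]
  -- interchange of sums
  have hswap1 : ∀ s, ∑ q ∈ Finset.univ.filter (fun q : V × Fin Q => q.2 ≠ x q.1),
      ugPr fste snde perm L (s, x s) q
      = ∑' t : ℕ, ∑ q ∈ Finset.univ.filter (fun q : V × Fin Q => q.2 ≠ x q.1),
          (1 / (L + 1)) * (L / (L + 1)) ^ t * (M ^ t) (s, x s) q := by
    intro s
    unfold ugPr
    exact (Summable.tsum_finsetSum (fun q _ => hsummand _ q)).symm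
  have hsummand2 : ∀ s : V, Summable (fun t : ℕ =>
      ((mdeg fste snde s : ℝ) / (2 * m)) *
      ∑ q ∈ Finset.univ.filter (fun q : V × Fin Q => q.2 ≠ x q.1),
        (1 / (L + 1)) * (L / (L + 1)) ^ t * (M ^ t) (s, x s) q) := by
    intro s
    exact (summable_sum (fun q _ => hsummand _ q)).mul_left _
  have hswap : ∑ s : V, ((mdeg fste snde s : ℝ) / (2 * m)) *
      ∑ q ∈ Finset.univ.filter (fun q : V × Fin Q => q.2 ≠ x q.1),
        ugPr fste snde perm L (s, x s) q
      = ∑' t : ℕ, ∑ s : V, ((mdeg fste snde s : ℝ) / (2 * m)) *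
          ∑ q ∈ Finset.univ.filter (fun q : V × Fin Q => q.2 ≠ x q.1),
            (1 / (L + 1)) * (L / (L + 1)) ^ t * (M ^ t) (s, x s) q := by
    have h1 : ∀ s ∈ (Finset.univ : Finset V), ((mdeg fste snde s : ℝ) / (2 * m)) *
        ∑ q ∈ Finset.univ.filter (fun q : V × Fin Q => q.2 ≠ x q.1),
          ugPr fste snde perm L (s, x s) q
        = ∑' t : ℕ, ((mdeg fste snde s : ℝ) / (2 * m)) *
            ∑ q ∈ Finset.univ.filter (fun q : V × Fin Q => q.2 ≠ x q.1),
              (1 / (L + 1)) * (L / (L + 1)) ^ t * (M ^ t) (s, x s) q := by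
      intro s _
      rw [hswap1 s]
      exact tsum_mul_left.symm
    rw [Finset.sum_congr rfl h1]
    exact (Summable.tsum_finsetSum (fun s _ => hsummand2 s)).symm
  -- per-step bound
  have hterm : ∀ t : ℕ, ∑ s : V, ((mdeg fste snde s : ℝ) / (2 * m)) *
      ∑ q ∈ Finset.univ.filter (fun q : V × Fin Q => q.2 ≠ x q.1),
        (1 / (L + 1)) * (L / (L + 1)) ^ t * (M ^ t) (s, x s) q
      ≤ (Vc / (2 * m * (L + 1))) * ((t : ℝ) * (L / (L + 1)) ^ t) := by
    intro t
    have hF := F_bound fste snde perm x h_ne hdeg t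
    have heq : ∑ s : V, ((mdeg fste snde s : ℝ) / (2 * m)) *
        ∑ q ∈ Finset.univ.filter (fun q : V × Fin Q => q.2 ≠ x q.1),
          (1 / (L + 1)) * (L / (L + 1)) ^ t * (M ^ t) (s, x s) q
        = ((1 / (L + 1)) * (L / (L + 1)) ^ t / (2 * m)) *
          ∑ s : V, (mdeg fste snde s : ℝ) *
            ∑ q ∈ Finset.univ.filter (fun q : V × Fin Q => q.2 ≠ x q.1),
              (M ^ t) (s, x s) q := by
      rw [Finset.mul_sum]
      apply Finset.sum_congr rfl
      intro s _
      rw [show ∑ q ∈ Finset.univ.filter (fun q : V × Fin Q => q.2 ≠ x q.1),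
          (1 / (L + 1)) * (L / (L + 1)) ^ t * (M ^ t) (s, x s) q
          = (1 / (L + 1)) * (L / (L + 1)) ^ t *
            ∑ q ∈ Finset.univ.filter (fun q : V × Fin Q => q.2 ≠ x q.1),
              (M ^ t) (s, x s) q from (Finset.mul_sum _ _ _).symm]
      ring
    rw [heq]
    calc ((1 / (L + 1)) * (L / (L + 1)) ^ t / (2 * m)) *
          ∑ s : V, (mdeg fste snde s : ℝ) *
            ∑ q ∈ Finset.univ.filter (fun q : V × Fin Q => q.2 ≠ x q.1),
              (M ^ t) (s, x s) q
        ≤ ((1 / (L + 1)) * (L / (L + 1)) ^ t / (2 * m)) * ((t : ℝ) * Vc) :=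
          mul_le_mul_of_nonneg_left (by rw [hVcdef]; exact_mod_cast hF) (by positivity)
      _ = (Vc / (2 * m * (L + 1))) * ((t : ℝ) * (L / (L + 1)) ^ t) := by
          have hm' : m ≠ 0 := ne_of_gt hm
          have hL1' : L + 1 ≠ 0 := ne_of_gt hL1
          field_simp
  have hnorm : ‖L / (L + 1)‖ < 1 := by
    rw [Real.norm_eq_abs, abs_of_nonneg hlam0]; exact hlam1
  have hsum_tpow : Summable (fun t : ℕ => (t : ℝ) * (L / (L + 1)) ^ t) := by
    have h := summable_pow_mul_geometric_of_norm_lt_one (R := ℝ) 1 hnorm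
    simpa using h
  have main : ∑ s : V, ((mdeg fste snde s : ℝ) / (2 * m)) * ugMu fste snde perm L s
      ≤ ε * L := by
    calc ∑ s : V, ((mdeg fste snde s : ℝ) / (2 * m)) * ugMu fste snde perm L s
        ≤ ∑ s : V, ((mdeg fste snde s : ℝ) / (2 * m)) *
            ∑ q ∈ Finset.univ.filter (fun q : V × Fin Q => q.2 ≠ x q.1),
              ugPr fste snde perm L (s, x s) q := by
          apply Finset.sum_le_sum
          intro s _
          exact mul_le_mul_of_nonneg_left ((hMu_le s).trans (hAmb_le s)) (by positivity)
      _ = ∑' t : ℕ, ∑ s : V, ((mdeg fste snde s : ℝ) / (2 * m)) *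
            ∑ q ∈ Finset.univ.filter (fun q : V × Fin Q => q.2 ≠ x q.1),
              (1 / (L + 1)) * (L / (L + 1)) ^ t * (M ^ t) (s, x s) q := hswap
      _ ≤ ∑' t : ℕ, (Vc / (2 * m * (L + 1))) * ((t : ℝ) * (L / (L + 1)) ^ t) :=
          Summable.tsum_le_tsum hterm (summable_sum (fun s _ => hsummand2 s))
            (hsum_tpow.mul_left _)
      _ = (Vc / (2 * m * (L + 1))) * ∑' t : ℕ, (t : ℝ) * (L / (L + 1)) ^ t :=
          tsum_mul_left
      _ = (Vc / (2 * m * (L + 1))) * ((L / (L + 1)) / (1 - L / (L + 1)) ^ 2) := by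
          rw [tsum_coe_mul_geometric_of_norm_lt_one hnorm]
      _ = (Vc / m) * (L / 2) := by
          have hm' : m ≠ 0 := ne_of_gt hm
          have hL1' : L + 1 ≠ 0 := ne_of_gt hL1
          have h1 : 1 - L / (L + 1) = 1 / (L + 1) := by field_simp; ring
          rw [h1]
          rw [show (L / (L + 1)) / (1 / (L + 1)) ^ 2 = L * (L + 1) by
            field_simp]
          field_simp
      _ ≤ ε * (L / 2) := mul_le_mul_of_nonneg_right hxε (by positivity)
      _ ≤ ε * L := by nlinarith
  constructor
  · rw [one_mul]; exact main
  · intro α hα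
    rw [one_mul]
    rw [le_div_iff₀ hα]
    calc (∑ s ∈ Finset.univ.filter (fun s : V => α ≤ ugMu fste snde perm L s),
          ((mdeg fste snde s : ℝ) / (2 * m))) * α
        = ∑ s ∈ Finset.univ.filter (fun s : V => α ≤ ugMu fste snde perm L s),
          ((mdeg fste snde s : ℝ) / (2 * m)) * α := Finset.sum_mul _ _ _
      _ ≤ ∑ s ∈ Finset.univ.filter (fun s : V => α ≤ ugMu fste snde perm L s),
          ((mdeg fste snde s : ℝ) / (2 * m)) * ugMu fste snde perm L s := by
          apply Finset.sum_le_sum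
          intro s hs
          simp only [Finset.mem_filter] at hs
          exact mul_le_mul_of_nonneg_left hs.2 (by positivity)
      _ ≤ ∑ s : V, ((mdeg fste snde s : ℝ) / (2 * m)) * ugMu fste snde perm L s := by
          apply Finset.sum_le_sum_of_subset_of_nonneg (Finset.filter_subset _ _)
          intro s _ _
          exact mul_nonneg (by positivity) (hMu_nn s)
      _ ≤ ε * L := main
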